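/- The limit as n → ∞ of n·k(n)²·C(n/2, k(n)/2) / C(n, k(n)) equals 0, uniformly over all choices of the function k(n) with 4 ≤ k(n) ≤ n/2 + 1 and n, k(n) even. Precisely: for every ε > 0 there exists N such that for all even n ≥ N and all even k with 4 ≤ k ≤ n/2 + 1, we have n·k²·C(n/2, k/2)/C(n, k) < ε. -/

import Mathlib

open Finset

-- m^j * j! <= descFactorial m j * j^j
lemma aux_fact_eq (j : ℕ) : Nat.factorial j = ∏ i ∈ Finset.range j, (j - i) := by
  rw [← Finset.prod_range_add_one_eq_factorial, ← Finset.prod_range_reflect (fun i => i + 1) j]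
  apply Finset.prod_congr rfl
  intro i hi
  simp only [Finset.mem_range] at hi
  omega

lemma aux_pow_fact (m j : ℕ) (h : j ≤ m) :
    m ^ j * Nat.factorial j ≤ m.descFactorial j * j ^ j := by
  have h1 : m ^ j * Nat.factorial j = ∏ i ∈ range j, m * (j - i) := by
    rw [prod_mul_distrib, prod_const, card_range, aux_fact_eq]
  have h2 : m.descFactorial j * j ^ j = ∏ i ∈ range j, (m - i) * j := by
    rw [prod_mul_distrib, prod_const, card_range, Nat.descFactorial_eq_prod_range]
  rw [h1, h2]
  apply Finset.prod_le_prod'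
  intro i hi
  simp only [Finset.mem_range] at hi
  have hij : i * j ≤ i * m := Nat.mul_le_mul_left i h
  have e1 : m * (j - i) + m * i = m * j := by
    rw [← Nat.mul_add]; congr 1; omega
  have e2 : (m - i) * j + i * j = m * j := by
    rw [← Nat.add_mul]; congr 1; omega
  have e3 : i * j ≤ m * i := by rw [Nat.mul_comm m i]; exact hij
  linarith

lemma aux_pow_le_choose (m j : ℕ) (h : j ≤ m) : m ^ j ≤ m.choose j * j ^ j := by
  have h1 := aux_pow_fact m j h
  rw [Nat.descFactorial_eq_factorial_mul_choose] at h1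
  have hpos : 0 < Nat.factorial j := Nat.factorial_pos j
  apply Nat.le_of_mul_le_mul_left _ hpos
  calc Nat.factorial j * m ^ j = m ^ j * Nat.factorial j := Nat.mul_comm _ _
    _ ≤ Nat.factorial j * m.choose j * j ^ j := h1
    _ = Nat.factorial j * (m.choose j * j ^ j) := by rw [Nat.mul_assoc]

lemma aux_vander (m j : ℕ) : m.choose j * m.choose j ≤ (m + m).choose (j + j) := by
  rw [Nat.add_choose_eq]
  have hmem : ((j, j) : ℕ × ℕ) ∈ Finset.HasAntidiagonal.antidiagonal (j + j) := by
    rw [Finset.HasAntidiagonal.mem_antidiagonal]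
  exact Finset.single_le_sum (f := fun p : ℕ × ℕ => m.choose p.1 * m.choose p.2)
    (fun _ _ => Nat.zero_le _) hmem

lemma aux_j4 : ∀ j : ℕ, 2 ≤ j → j ^ 4 ≤ 2 * 4 ^ j := by
  intro j hj
  induction j with
  | zero => omega
  | succ n ih =>
    rcases Nat.lt_or_ge n 3 with h | h
    · interval_cases n <;> norm_num
    · have hn : 2 ≤ n := by omega
      have := ih hn
      have a1 : 3 * n ≤ n ^ 2 := by nlinarith
      have b1 : 3 * n ^ 2 ≤ n ^ 3 := by nlinarith
      have c1 : 3 * n ^ 3 ≤ n ^ 4 := by nlinarith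
      have key : (n + 1) ^ 4 ≤ 4 * n ^ 4 := by nlinarith
      calc (n + 1) ^ 4 ≤ 4 * n ^ 4 := key
        _ ≤ 4 * (2 * 4 ^ n) := by omega
        _ = 2 * 4 ^ (n + 1) := by ring

set_option maxHeartbeats 1000000 in
theorem stmt_1 :
    ∀ ε : ℝ, 0 < ε → ∃ N : ℕ, ∀ n k : ℕ, Even n → Even k → N ≤ n →
      4 ≤ k → k ≤ n / 2 + 1 →
      (n : ℝ) * (k : ℝ) ^ 2 * ((n / 2).choose (k / 2) : ℝ) / (n.choose k : ℝ) < ε := by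
  intro ε hε
  -- get J from the limit: j^3/(3/2)^j → 0
  have hlim := tendsto_pow_const_div_const_pow_of_one_lt 3 (r := 3/2) (by norm_num)
  have hev := (hlim.eventually (gt_mem_nhds (show (0:ℝ) < ε/32 by positivity))).exists_forall_of_atTop
  obtain ⟨J, hJ⟩ := hev
  obtain ⟨M, hM⟩ := exists_nat_gt (256 / ε)
  refine ⟨8 * J + 2 * M + 16, ?_⟩
  intro n k hn hk hNn hk4 hkn
  obtain ⟨m, rfl⟩ := hn
  obtain ⟨j, rfl⟩ := hk
  have hm2 : (m + m) / 2 = m := by omega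
  have hj2 : (j + j) / 2 = j := by omega
  rw [hm2, hj2] at *
  have hj2' : 2 ≤ j := by omega
  have hjm : j + j ≤ m + 1 := by omega
  have hjm' : j ≤ m := by omega
  have hmM : M ≤ m := by omega
  -- positivity facts
  have hc1 : 0 < m.choose j := Nat.choose_pos hjm'
  have hc2 : 0 < (m + m).choose (j + j) := Nat.choose_pos (by omega)
  have hc1R : (0:ℝ) < m.choose j := by exact_mod_cast hc1
  have hc2R : (0:ℝ) < (m + m).choose (j + j) := by exact_mod_cast hc2
  -- Vandermonde bound
  have hvand : (m.choose j : ℝ) * m.choose j ≤ (m + m).choose (j + j) := by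
    exact_mod_cast aux_vander m j
  -- reduce to 8 m j^2 < ε * choose m j
  have key : 8 * (m:ℝ) * (j:ℝ)^2 < ε * (m.choose j : ℝ) := by
    -- (m/j)^j ≤ choose m j
    have hpow : ((m:ℝ) / j) ^ j ≤ m.choose j := by
      have h1 : (m:ℝ) ^ j ≤ m.choose j * (j:ℝ) ^ j := by exact_mod_cast aux_pow_le_choose m j hjm'
      have hjpos : (0:ℝ) < (j:ℝ) ^ j := by positivity
      rw [div_pow, div_le_iff₀ hjpos]
      exact h1
    have hjR : (0:ℝ) < (j:ℝ) := by exact_mod_cast (show 0 < j by omega)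
    rcases Nat.lt_or_ge m (4 * j) with hcase | hcase
    · -- case B : m < 4j, so j ≥ J, use exponential bound
      have hjJ : J ≤ j := by omega
      have hfrac : (3/2 : ℝ) ≤ (m:ℝ) / j := by
        rw [le_div_iff₀ hjR]
        have h3j : (3:ℝ) * j ≤ 2 * m := by exact_mod_cast (show 3*j ≤ 2*m by omega)
        linarith
      have h32 : (3/2:ℝ) ^ j ≤ m.choose j :=
        le_trans (pow_le_pow_left₀ (by norm_num) hfrac j) hpow
      have hJj := hJ j hjJ
      rw [div_lt_iff₀ (by positivity)] at hJj
      have hmlt : (m:ℝ) < 4 * j := by exact_mod_cast hcase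
      calc 8 * (m:ℝ) * (j:ℝ)^2 ≤ 32 * (j:ℝ)^3 := by
            nlinarith [mul_nonneg (sq_nonneg (j:ℝ)) (show (0:ℝ) ≤ 4*(j:ℝ) - m by linarith)]
        _ < ε * (3/2)^j := by linarith
        _ ≤ ε * m.choose j := by nlinarith
    · -- case A : 4j ≤ m
      have h4 : (4:ℝ) ≤ (m:ℝ) / j := by
        rw [le_div_iff₀ hjR]; exact_mod_cast hcase
      have hsplit : ((m:ℝ)/j)^2 * 4 ^ (j - 2) ≤ ((m:ℝ)/j) ^ j := by
        calc ((m:ℝ)/j)^2 * 4 ^ (j-2) ≤ ((m:ℝ)/j)^2 * ((m:ℝ)/j) ^ (j-2) :=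
              mul_le_mul_of_nonneg_left (pow_le_pow_left₀ (by norm_num) h4 _) (by positivity)
          _ = ((m:ℝ)/j) ^ (2 + (j - 2)) := (pow_add _ 2 (j-2)).symm
          _ = ((m:ℝ)/j) ^ j := by congr 1; omega
      have hj4 : (j:ℝ)^4 ≤ 2 * 4 ^ j := by exact_mod_cast aux_j4 j hj2'
      have h4j : (4:ℝ) ^ j = 16 * 4 ^ (j - 2) := by
        calc (4:ℝ) ^ j = 4 ^ (2 + (j - 2)) := by congr 1; omega
          _ = 16 * 4 ^ (j - 2) := by rw [pow_add]; norm_num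
      have hmgt : 256 / ε < (m:ℝ) := lt_of_lt_of_le hM (by exact_mod_cast hmM)
      rw [div_lt_iff₀ hε] at hmgt
      -- 8 m j^2 < ε (m/j)^2 4^{j-2} ≤ ε choose
      have hfin : 8 * (m:ℝ) * j^2 < ε * (((m:ℝ)/j)^2 * 4 ^ (j-2)) := by
        rw [div_pow]
        rw [show ε * ((m:ℝ)^2 / j^2 * 4^(j-2)) = ε * (m:ℝ)^2 * 4^(j-2) / j^2 by ring]
        rw [lt_div_iff₀ (by positivity)]
        have h16 : (j:ℝ)^4 ≤ 32 * 4 ^ (j - 2) := by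
          rw [h4j] at hj4; linarith
        have hpow2 : (0:ℝ) < (4:ℝ) ^ (j-2) := by positivity
        have hmR : (0:ℝ) < m := by exact_mod_cast (show 0 < m by omega)
        nlinarith [mul_pos hmR hpow2]
      calc 8 * (m:ℝ) * j^2 < ε * (((m:ℝ)/j)^2 * 4 ^ (j-2)) := hfin
        _ ≤ ε * ((m:ℝ)/j) ^ j := by nlinarith
        _ ≤ ε * m.choose j := by nlinarith [pow_pos (div_pos (show (0:ℝ) < m by exact_mod_cast (show 0 < m by omega)) hjR) j]
  -- conclude
  rw [div_lt_iff₀ hc2R]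
  push_cast
  calc (↑m + ↑m) * (↑j + ↑j)^2 * (m.choose j : ℝ)
      = (8 * m * (j:ℝ)^2) * m.choose j := by ring
    _ < (ε * m.choose j) * m.choose j := by nlinarith
    _ ≤ ε * (m + m).choose (j + j) := by nlinarith
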